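/- In the game of Chicken with ε₁ = 0 and any ε₂ ∈ [0, 0.1], the profile in which player 1 plays the Nash equilibrium strategy (swerve with probability 0.9) is part of an ε-safe equilibrium; i.e., there exists an ε-safe equilibrium in which player 1 swerves with probability 0.9. -/
import Mathlib


open Finset

/-- Expected utility in a two-player strategic-form game, extended bilinearly. -/
def EU {S1 S2 : Type*} [Fintype S1] [Fintype S2] (u : S1 → S2 → ℝ)
    (σ1 : S1 → ℝ) (σ2 : S2 → ℝ) : ℝ :=
  ∑ a : S1, ∑ b : S2, σ1 a * σ2 b * u a b

/-- `(σ1, σ2)` is an `(ε1, ε2)`-safe equilibrium of the two-player game `(u1, u2)`. -/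
def IsSafeEq {S1 S2 : Type*} [Fintype S1] [Fintype S2]
    (u1 u2 : S1 → S2 → ℝ) (ε1 ε2 : ℝ) (σ1 : S1 → ℝ) (σ2 : S2 → ℝ) : Prop :=
  ∃ τ1 ρ1 : S1 → ℝ, ∃ τ2 ρ2 : S2 → ℝ,
    τ1 ∈ stdSimplex ℝ S1 ∧ ρ1 ∈ stdSimplex ℝ S1 ∧
    τ2 ∈ stdSimplex ℝ S2 ∧ ρ2 ∈ stdSimplex ℝ S2 ∧
    σ1 = (fun s => ε1 * τ1 s + (1 - ε1) * ρ1 s) ∧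
    σ2 = (fun s => ε2 * τ2 s + (1 - ε2) * ρ2 s) ∧
    (∀ σ ∈ stdSimplex ℝ S1, EU u1 σ σ2 ≤ EU u1 ρ1 σ2) ∧
    (∀ σ ∈ stdSimplex ℝ S1, EU u2 τ1 σ2 ≤ EU u2 σ σ2) ∧
    (∀ σ ∈ stdSimplex ℝ S2, EU u2 σ1 σ ≤ EU u2 σ1 ρ2) ∧
    (∀ σ ∈ stdSimplex ℝ S2, EU u1 σ1 τ2 ≤ EU u1 σ1 σ)

/-- `(σ1, σ2)` is a Nash equilibrium of the two-player game `(u1, u2)`. -/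
def IsNash {S1 S2 : Type*} [Fintype S1] [Fintype S2]
    (u1 u2 : S1 → S2 → ℝ) (σ1 : S1 → ℝ) (σ2 : S2 → ℝ) : Prop :=
  σ1 ∈ stdSimplex ℝ S1 ∧ σ2 ∈ stdSimplex ℝ S2 ∧
  (∀ σ ∈ stdSimplex ℝ S1, EU u1 σ σ2 ≤ EU u1 σ1 σ2) ∧
  (∀ σ ∈ stdSimplex ℝ S2, EU u2 σ1 σ ≤ EU u2 σ1 σ2)

/-- Row player payoffs in Chicken: strategy 0 = swerve, 1 = straight. -/
def chickenU1 : Fin 2 → Fin 2 → ℝ := fun a b => !![(0:ℝ), -1; 1, -10] a b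

/-- Column player payoffs in Chicken. -/
def chickenU2 : Fin 2 → Fin 2 → ℝ := fun a b => !![(0:ℝ), 1; -1, -10] a b

/-- in Chicken with ε₁ = 0 and ε₂ ∈ [0, 0.1], there is an ε-safe
equilibrium in which player 1 swerves with probability 0.9. -/
theorem chicken_nash_strategy_safe (ε2 : ℝ) (hε2 : ε2 ∈ Set.Icc (0:ℝ) (1/10)) :
    ∃ σ2 ∈ stdSimplex ℝ (Fin 2),
      IsSafeEq chickenU1 chickenU2 0 ε2 ![(9:ℝ)/10, 1/10] σ2 := by
  obtain ⟨h0, h1⟩ := hε2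
  have hne : (1:ℝ) - ε2 ≠ 0 := by linarith
  refine ⟨![(9:ℝ)/10, 1/10], ?_, ![0,1], ![(9:ℝ)/10, 1/10], ![0,1],
    ![(9/10)/(1-ε2), ((1/10)-ε2)/(1-ε2)], ?_, ?_, ?_, ?_, ?_, ?_, ?_, ?_, ?_, ?_⟩
  · constructor
    · intro x; fin_cases x <;> norm_num
    · simp [Fin.sum_univ_two]; norm_num
  · constructor
    · intro x; fin_cases x <;> norm_num
    · simp [Fin.sum_univ_two]
  · constructor
    · intro x; fin_cases x <;> norm_num
    · simp [Fin.sum_univ_two]; norm_num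
  · constructor
    · intro x; fin_cases x <;> norm_num
    · simp [Fin.sum_univ_two]
  · constructor
    · intro x; fin_cases x <;> simp <;> apply div_nonneg <;> linarith
    · simp [Fin.sum_univ_two]
      field_simp
      ring
  · funext s; fin_cases s <;> simp
  · funext s; fin_cases s <;> simp <;> field_simp <;> ring
  · intro σ hσ
    obtain ⟨hσ0, hσ1⟩ := hσ
    have h0' := hσ0 0; have h1' := hσ0 1
    rw [Fin.sum_univ_two] at hσ1
    simp [EU, Fin.sum_univ_two, chickenU1, chickenU2]
    nlinarith
  · intro σ hσ
    obtain ⟨hσ0, hσ1⟩ := hσ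
    have h0' := hσ0 0; have h1' := hσ0 1
    rw [Fin.sum_univ_two] at hσ1
    simp [EU, Fin.sum_univ_two, chickenU1, chickenU2]
    nlinarith
  · intro σ hσ
    obtain ⟨hσ0, hσ1⟩ := hσ
    have h0' := hσ0 0; have h1' := hσ0 1
    rw [Fin.sum_univ_two] at hσ1
    have hpos : (0:ℝ) < 1 - ε2 := by linarith
    simp [EU, Fin.sum_univ_two, chickenU1, chickenU2]
    rw [div_eq_mul_inv, div_eq_mul_inv, div_eq_mul_inv]
    have hinv : (1 - ε2)⁻¹ * (1 - ε2) = 1 := inv_mul_cancel₀ hne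
    nlinarith [mul_pos hpos (inv_pos.mpr hpos)]
  · intro σ hσ
    obtain ⟨hσ0, hσ1⟩ := hσ
    have h0' := hσ0 0; have h1' := hσ0 1
    rw [Fin.sum_univ_two] at hσ1
    simp [EU, Fin.sum_univ_two, chickenU1, chickenU2]
    nlinarith
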